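/- Let η : Z⟨a,b⟩ → Z⟨a,b⟩ be the linear map with η(b^m a^k) = 2(a−b)^{m+k} on monomials of the form b^m a^k and η(w) = 0 on all other ab-monomials. For any graded poset P of rank n+1, η(Ψ(P)) = Z(P) · (a−b)^n, where Z(P) = Σ_{0̂ ≤ x ≤ 1̂} (−1)^{ρ(x)} μ(0̂, x) is the Zaslavsky invariant. -/

import Mathlib

open scoped TensorProduct
open scoped Classical

noncomputable section

abbrev Alg : Type := MonoidAlgebra ℤ (FreeMonoid Bool)

def va : Alg := MonoidAlgebra.of ℤ (FreeMonoid Bool) (FreeMonoid.of false)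
def vb : Alg := MonoidAlgebra.of ℤ (FreeMonoid Bool) (FreeMonoid.of true)

def monoOf (l : List Bool) : Alg := MonoidAlgebra.of ℤ (FreeMonoid Bool) (FreeMonoid.ofList l)

def toF (x : Alg) : FreeMonoid Bool →₀ ℤ := x.coeff

/-- The weight of a chain encoded as a strictly increasing map `f : Fin (k+1) → P`. -/
def wtChain {P : Type} (ρ : P → ℕ) {k : ℕ} (f : Fin (k+1) → P) : Alg :=
  (List.ofFn (fun i : Fin k =>
    (va - vb) ^ (ρ (f i.succ) - ρ (f i.castSucc) - 1) *
      (if (i : ℕ) + 1 < k then vb else 1))).prod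

def zetaChain {P : Type} (zb : P → P → ℤ) {k : ℕ} (f : Fin (k+1) → P) : ℤ :=
  ∏ i : Fin k, zb (f i.castSucc) (f i.succ)

/-- The ab-index of the interval `[lo, hi]` of a quasi-graded poset `(P, ρ, zb)`. -/
def PsiI {P : Type} [Fintype P] [PartialOrder P] (ρ : P → ℕ) (zb : P → P → ℤ)
    (lo hi : P) : Alg :=
  ∑ k ∈ Finset.range (Fintype.card P + 1),
    ∑ f : Fin (k+1) → P,
      if StrictMono f ∧ f 0 = lo ∧ f (Fin.last k) = hi
      then zetaChain zb f • wtChain ρ f else 0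

/-- The algebra map `κ` with `κ(a) = a - b`, `κ(b) = 0`. -/
def kappa : Alg →ₐ[ℤ] Alg :=
  MonoidAlgebra.lift ℤ Alg (FreeMonoid Bool)
    (FreeMonoid.lift (fun s => if s then 0 else va - vb))

/-- The algebra map `λ̄` with `λ̄(a) = 0`, `λ̄(b) = a - b`. -/
def lambdabar : Alg →ₐ[ℤ] Alg :=
  MonoidAlgebra.lift ℤ Alg (FreeMonoid Bool)
    (FreeMonoid.lift (fun s => if s then va - vb else 0))

/-- `η` on monomials: `b^m a^k ↦ 2 (a-b)^(m+k)`, other monomials to `0`. -/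
def etaMon (w : FreeMonoid Bool) : Alg :=
  if ∃ m k : ℕ, FreeMonoid.toList w = List.replicate m true ++ List.replicate k false
  then (2 : ℤ) • (va - vb) ^ (FreeMonoid.toList w).length else 0

def etaOp (x : Alg) : Alg := (toF x).sum fun w c => c • etaMon w

/-- The letter-deletion coproduct on `Z⟨a,b⟩`. -/
def Delta (x : Alg) : Alg ⊗[ℤ] Alg :=
  (toF x).sum fun w c => c •
    ∑ i ∈ Finset.range (FreeMonoid.toList w).length,
      monoOf ((FreeMonoid.toList w).take i) ⊗ₜ[ℤ] monoOf ((FreeMonoid.toList w).drop (i+1))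

/-- The Sweedler-style convolution `x ↦ Σ F(x₍₁₎) · b · G(x₍₂₎)`. -/
def sweedler (F G : Alg → Alg) (x : Alg) : Alg :=
  (toF x).sum fun w c => c •
    ∑ i ∈ Finset.range (FreeMonoid.toList w).length,
      F (monoOf ((FreeMonoid.toList w).take i)) * vb *
        G (monoOf ((FreeMonoid.toList w).drop (i+1)))

/-- `phiAux n = φ_{n+1}`, defined by `φ₁ = κ` and `φ_{k+1}(w) = Σ φ_k(w₍₁₎) · b · η(w₍₂₎)`. -/
def phiAux : ℕ → Alg → Alg
  | 0 => fun x => kappa x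
  | (n+1) => fun x => sweedler (phiAux n) etaOp x

def maxLen (x : Alg) : ℕ := (toF x).support.sup fun w => (FreeMonoid.toList w).length

/-- The operator `φ = Σ_{k ≥ 1} φ_k` (the sum is finite on any given polynomial). -/
def phi (x : Alg) : Alg := ∑ k ∈ Finset.range (maxLen x + 1), phiAux k x

/-- `ω` on a monomial: replace each occurrence of `ab` by `2d` and remaining letters by `c`. -/
def omegaList : List Bool → Alg
  | [] => 1
  | false :: true :: rest => ((2:ℤ) • (va * vb + vb * va)) * omegaList rest
  | _ :: rest => (va + vb) * omegaList rest

def omegaOp (x : Alg) : Alg := (toF x).sum fun w c => c • omegaList (FreeMonoid.toList w)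

/-- The operator `G(w) = φ(w)·b + Σ φ(w₍₁₎)·b·λ̄(w₍₂₎)·(a-b)`. -/
def Gop (w : Alg) : Alg := phi w * vb + sweedler phi (fun y => lambdabar y) w * (va - vb)

/-- The reversal map `u ↦ u*` reading each monomial backwards. -/
def revOp (x : Alg) : Alg :=
  (toF x).sum fun w c =>
    MonoidAlgebra.single (FreeMonoid.ofList (FreeMonoid.toList w).reverse) c

/-- `H'` deletes the last letter of each monomial, `H'(1) = 0`. -/
def Hp (x : Alg) : Alg :=
  (toF x).sum fun w c => if w = 1 then 0 else c • monoOf ((FreeMonoid.toList w).dropLast)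

end
noncomputable section EtaProofAux

/-! ### Sign helpers -/

lemma negpow_congr (m n : ℕ) (h : m % 2 = n % 2) : ((-1 : ℤ)) ^ m = (-1) ^ n := by
  rcases Nat.even_or_odd m with hm | hm
  · have hn : Even n := Nat.even_iff.2 (by rw [← h]; exact Nat.even_iff.1 hm)
    rw [hm.neg_one_pow, hn.neg_one_pow]
  · have hn : Odd n := Nat.odd_iff.2 (by rw [← h]; exact Nat.odd_iff.1 hm)
    rw [hm.neg_one_pow, hn.neg_one_pow]

/-! ### List lemmas -/

lemma rep_iff_true (l : List Bool) :
    (∃ m k, true :: l = List.replicate m true ++ List.replicate k false) ↔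
      (∃ m k, l = List.replicate m true ++ List.replicate k false) := by
  constructor
  · rintro ⟨m, k, h⟩
    cases m with
    | zero =>
      cases k with
      | zero => simp at h
      | succ k => rw [List.replicate_succ] at h; simp at h
    | succ m =>
      rw [List.replicate_succ] at h
      simp only [List.cons_append, List.cons.injEq] at h
      exact ⟨m, k, h.2⟩
  · rintro ⟨m, k, h⟩
    exact ⟨m + 1, k, by rw [List.replicate_succ]; simp [h]⟩

lemma rep_iff_false (l : List Bool) :
    (∃ m k, false :: l = List.replicate m true ++ List.replicate k false) ↔
      (∃ k, l = List.replicate k false) := by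
  constructor
  · rintro ⟨m, k, h⟩
    cases m with
    | zero =>
      cases k with
      | zero => simp at h
      | succ k =>
        rw [List.replicate_succ] at h
        simp only [List.replicate_zero, List.nil_append, List.cons.injEq] at h
        exact ⟨k, h.2⟩
    | succ m => rw [List.replicate_succ] at h; simp at h
  · rintro ⟨k, h⟩
    exact ⟨0, k + 1, by rw [List.replicate_succ]; simp [h]⟩

lemma repf_iff_false (l : List Bool) :
    (∃ k, false :: l = List.replicate k false) ↔ ∃ k, l = List.replicate k false := by
  constructor
  · rintro ⟨k, h⟩
    cases k with
    | zero => simp at h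
    | succ k =>
      rw [List.replicate_succ] at h
      simp only [List.cons.injEq] at h
      exact ⟨k, h.2⟩
  · rintro ⟨k, h⟩
    exact ⟨k + 1, by rw [List.replicate_succ]; simp [h]⟩

lemma repf_true (l : List Bool) : ¬ ∃ k, true :: l = List.replicate k false := by
  rintro ⟨k, h⟩
  cases k with
  | zero => simp at h
  | succ k => rw [List.replicate_succ] at h; simp at h

lemma toList_of_mul (s : Bool) (w : FreeMonoid Bool) :
    FreeMonoid.toList (FreeMonoid.of s * w) = s :: FreeMonoid.toList w := rfl

/-! ### theta, monomial lemmas -/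

def thetaMon (w : FreeMonoid Bool) : Alg :=
  if ∃ k : ℕ, FreeMonoid.toList w = List.replicate k false
  then (2 : ℤ) • (va - vb) ^ (FreeMonoid.toList w).length else 0

def thetaOp (x : Alg) : Alg := (toF x).sum fun w c => c • thetaMon w

lemma etaOp_eq : etaOp = fun x => Finsupp.linearCombination ℤ etaMon x.coeff := by
  funext x; rw [Finsupp.linearCombination_apply]; rfl

lemma thetaOp_eq : thetaOp = fun x => Finsupp.linearCombination ℤ thetaMon x.coeff := by
  funext x; rw [Finsupp.linearCombination_apply]; rfl

lemma etaOp_add (x y : Alg) : etaOp (x + y) = etaOp x + etaOp y := by simp [etaOp_eq, MonoidAlgebra.coeff_add]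
lemma thetaOp_add (x y : Alg) : thetaOp (x + y) = thetaOp x + thetaOp y := by simp [thetaOp_eq, MonoidAlgebra.coeff_add]
lemma etaOp_sub (x y : Alg) : etaOp (x - y) = etaOp x - etaOp y := by simp [etaOp_eq, MonoidAlgebra.coeff_sub]
lemma thetaOp_sub (x y : Alg) : thetaOp (x - y) = thetaOp x - thetaOp y := by simp [thetaOp_eq, MonoidAlgebra.coeff_sub]
lemma etaOp_zero : etaOp 0 = 0 := by simp [etaOp_eq, MonoidAlgebra.coeff_zero]
lemma thetaOp_zero : thetaOp 0 = 0 := by simp [thetaOp_eq, MonoidAlgebra.coeff_zero]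
lemma etaOp_smul (c : ℤ) (x : Alg) : etaOp (c • x) = c • etaOp x := by
  rw [etaOp_eq]; simp only [MonoidAlgebra.coeff_smul]; exact map_smul _ c _

lemma etaOp_single (w : FreeMonoid Bool) (c : ℤ) :
    etaOp (MonoidAlgebra.single w c) = c • etaMon w := by
  rw [etaOp_eq]; simp only [MonoidAlgebra.coeff_single]; exact Finsupp.linearCombination_single _ _ _
lemma thetaOp_single (w : FreeMonoid Bool) (c : ℤ) :
    thetaOp (MonoidAlgebra.single w c) = c • thetaMon w := by
  rw [thetaOp_eq]; simp only [MonoidAlgebra.coeff_single]; exact Finsupp.linearCombination_single _ _ _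

lemma vb_eq : vb = MonoidAlgebra.single (FreeMonoid.of true) 1 := by simp [vb]
lemma va_eq : va = MonoidAlgebra.single (FreeMonoid.of false) 1 := by simp [va]

lemma vb_mul_single (w : FreeMonoid Bool) (c : ℤ) :
    vb * (MonoidAlgebra.single w c : Alg) = MonoidAlgebra.single (FreeMonoid.of true * w) c := by
  rw [vb_eq, MonoidAlgebra.single_mul_single, one_mul]
lemma va_mul_single (w : FreeMonoid Bool) (c : ℤ) :
    va * (MonoidAlgebra.single w c : Alg) = MonoidAlgebra.single (FreeMonoid.of false * w) c := by
  rw [va_eq, MonoidAlgebra.single_mul_single, one_mul]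

lemma etaMon_true (w : FreeMonoid Bool) :
    etaMon (FreeMonoid.of true * w) = (va - vb) * etaMon w := by
  unfold etaMon
  rw [toList_of_mul]
  by_cases h : ∃ m k, FreeMonoid.toList w = List.replicate m true ++ List.replicate k false
  · rw [if_pos ((rep_iff_true _).2 h), if_pos h, List.length_cons, pow_succ', mul_smul_comm]
  · rw [if_neg (fun hc => h ((rep_iff_true _).1 hc)), if_neg h, mul_zero]

lemma etaMon_false (w : FreeMonoid Bool) :
    etaMon (FreeMonoid.of false * w) = (va - vb) * thetaMon w := by
  unfold etaMon thetaMon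
  rw [toList_of_mul]
  by_cases h : ∃ k, FreeMonoid.toList w = List.replicate k false
  · rw [if_pos ((rep_iff_false _).2 h), if_pos h, List.length_cons, pow_succ', mul_smul_comm]
  · rw [if_neg (fun hc => h ((rep_iff_false _).1 hc)), if_neg h, mul_zero]

lemma thetaMon_true (w : FreeMonoid Bool) : thetaMon (FreeMonoid.of true * w) = 0 := by
  unfold thetaMon
  rw [toList_of_mul, if_neg (repf_true _)]

lemma thetaMon_false (w : FreeMonoid Bool) :
    thetaMon (FreeMonoid.of false * w) = (va - vb) * thetaMon w := by
  unfold thetaMon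
  rw [toList_of_mul]
  by_cases h : ∃ k, FreeMonoid.toList w = List.replicate k false
  · rw [if_pos ((repf_iff_false _).2 h), if_pos h, List.length_cons, pow_succ', mul_smul_comm]
  · rw [if_neg (fun hc => h ((repf_iff_false _).1 hc)), if_neg h, mul_zero]

lemma etaMon_one : etaMon 1 = (2 : ℤ) • 1 := by
  unfold etaMon
  rw [if_pos ⟨0, 0, rfl⟩]; rfl
lemma thetaMon_one : thetaMon 1 = (2 : ℤ) • 1 := by
  unfold thetaMon
  rw [if_pos ⟨0, rfl⟩]; rfl

lemma etaOp_one : etaOp 1 = (2 : ℤ) • 1 := by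
  rw [MonoidAlgebra.one_def, etaOp_single, etaMon_one, one_smul, MonoidAlgebra.one_def]
lemma thetaOp_one : thetaOp 1 = (2 : ℤ) • 1 := by
  rw [MonoidAlgebra.one_def, thetaOp_single, thetaMon_one, one_smul, MonoidAlgebra.one_def]

/-! ### operator multiplication lemmas -/

lemma etaOp_b_mul (u : Alg) : etaOp (vb * u) = (va - vb) * etaOp u := by
  induction u using MonoidAlgebra.induction_linear with
  | zero => rw [mul_zero, etaOp_zero, mul_zero]
  | add f g hf hg => rw [mul_add, etaOp_add, etaOp_add, hf, hg, mul_add]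
  | single w c => rw [vb_mul_single, etaOp_single, etaOp_single, etaMon_true, mul_smul_comm]

lemma etaOp_a_mul (u : Alg) : etaOp (va * u) = (va - vb) * thetaOp u := by
  induction u using MonoidAlgebra.induction_linear with
  | zero => rw [mul_zero, etaOp_zero, thetaOp_zero, mul_zero]
  | add f g hf hg => rw [mul_add, etaOp_add, thetaOp_add, hf, hg, mul_add]
  | single w c => rw [va_mul_single, etaOp_single, thetaOp_single, etaMon_false, mul_smul_comm]

lemma thetaOp_b_mul (u : Alg) : thetaOp (vb * u) = 0 := by
  induction u using MonoidAlgebra.induction_linear with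
  | zero => rw [mul_zero, thetaOp_zero]
  | add f g hf hg => rw [mul_add, thetaOp_add, hf, hg, add_zero]
  | single w c => rw [vb_mul_single, thetaOp_single, thetaMon_true, smul_zero]

lemma thetaOp_a_mul (u : Alg) : thetaOp (va * u) = (va - vb) * thetaOp u := by
  induction u using MonoidAlgebra.induction_linear with
  | zero => rw [mul_zero, thetaOp_zero, mul_zero]
  | add f g hf hg => rw [mul_add, thetaOp_add, thetaOp_add, hf, hg, mul_add]
  | single w c => rw [va_mul_single, thetaOp_single, thetaOp_single, thetaMon_false, mul_smul_comm]

lemma etaOp_ab_mul (u : Alg) : etaOp ((va - vb) * u) = (va - vb) * (thetaOp u - etaOp u) := by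
  rw [sub_mul, etaOp_sub, etaOp_a_mul, etaOp_b_mul, mul_sub]

lemma thetaOp_ab_mul (u : Alg) : thetaOp ((va - vb) * u) = (va - vb) * thetaOp u := by
  rw [sub_mul, thetaOp_sub, thetaOp_a_mul, thetaOp_b_mul, sub_zero]

lemma thetaOp_pow_mul (e : ℕ) (u : Alg) :
    thetaOp ((va - vb) ^ e * u) = (va - vb) ^ e * thetaOp u := by
  induction e generalizing u with
  | zero => simp
  | succ e ih =>
    rw [pow_succ, mul_assoc, ih, thetaOp_ab_mul, mul_assoc]

def alphaE (e : ℕ) : ℤ := if Even e then 0 else 1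

lemma alphaE_succ (e : ℕ) : alphaE (e + 1) = alphaE e + (-1) ^ e := by
  rcases Nat.even_or_odd e with h | h
  · have h1 : ¬ Even (e + 1) := by simpa [Nat.even_add_one] using h
    simp only [alphaE, if_pos h, if_neg h1, h.neg_one_pow]
    norm_num
  · have h0 : ¬ Even e := Nat.not_even_iff_odd.2 h
    have h1 : Even (e + 1) := Nat.even_add_one.2 h0
    simp only [alphaE, if_pos h1, if_neg h0, h.neg_one_pow]
    norm_num

lemma etaOp_pow_mul (e : ℕ) (u : Alg) :
    etaOp ((va - vb) ^ e * u) =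
      (va - vb) ^ e * (alphaE e • thetaOp u + ((-1 : ℤ)) ^ e • etaOp u) := by
  induction e generalizing u with
  | zero => simp [alphaE]
  | succ e ih =>
    rw [pow_succ, mul_assoc, ih ((va - vb) * u), etaOp_ab_mul, thetaOp_ab_mul, alphaE_succ,
      mul_assoc]
    congr 1
    rw [mul_sub, mul_add, mul_smul_comm, mul_smul_comm, pow_succ]
    module

end EtaProofAux
noncomputable section EtaProofAuxB

lemma pen_index_eq (j : ℕ) :
    ((Fin.last j).castSucc.succ : Fin (j + 3)) = (Fin.last (j + 1)).castSucc := by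
  ext; simp

lemma wtChain_base {P : Type} (ρ : P → ℕ) (f : Fin 2 → P) :
    wtChain ρ f = (va - vb) ^ (ρ (f 1) - ρ (f 0) - 1) * 1 := by
  unfold wtChain
  rw [List.ofFn_succ]
  simp

lemma wtChain_cons {P : Type} (ρ : P → ℕ) (j : ℕ) (f : Fin (j + 3) → P) :
    wtChain ρ f = (va - vb) ^ (ρ (f 1) - ρ (f 0) - 1) *
      (vb * wtChain ρ (fun i : Fin (j + 2) => f i.succ)) := by
  unfold wtChain
  rw [List.ofFn_succ, List.prod_cons]
  have htail : (List.ofFn fun i : Fin (j + 1) =>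
      (va - vb) ^ (ρ (f (i.succ : Fin (j+2)).succ) - ρ (f ((i.succ : Fin (j+2))).castSucc) - 1) *
        (if ((i.succ : Fin (j+2)) : ℕ) + 1 < j + 2 then vb else 1))
      = (List.ofFn fun i : Fin (j + 1) =>
      (va - vb) ^ (ρ ((fun i : Fin (j+2) => f i.succ) i.succ) -
          ρ ((fun i : Fin (j+2) => f i.succ) i.castSucc) - 1) *
        (if (i : ℕ) + 1 < j + 1 then vb else 1)) := by
    congr 1
    funext i
    simp only [Fin.succ_castSucc, Fin.val_succ, Nat.add_lt_add_iff_right]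
  rw [htail]
  have hhead : (if ((0 : Fin (j+2)) : ℕ) + 1 < j + 2 then vb else 1) = vb := by
    rw [if_pos]; simp
  rw [hhead]
  simp only [Fin.succ_zero_eq_one, Fin.castSucc_zero]
  rw [mul_assoc]

def cv {P : Type} (ρ : P → ℕ) : (k : ℕ) → (Fin (k + 2) → P) → ℤ
  | 0, f => 2 * (alphaE (ρ (f 1) - ρ (f 0) - 1) + (-1) ^ (ρ (f 1) - ρ (f 0) - 1))
  | (j + 1), f => (-1) ^ (ρ (f 1) - ρ (f 0) - 1) * cv ρ j (fun i => f i.succ)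

lemma rho_le_last {P : Type} (ρ : P → ℕ) :
    ∀ (k : ℕ) (f : Fin (k + 1) → P),
      (∀ i : Fin k, ρ (f i.castSucc) < ρ (f i.succ)) →
      ρ (f 0) + k ≤ ρ (f (Fin.last k)) := by
  intro k
  induction k with
  | zero => intro f _; simp [Fin.last]
  | succ k ih =>
    intro f hmono
    have h0 : ρ (f 0) < ρ (f 1) := by
      have := hmono 0
      simpa [Fin.castSucc_zero, Fin.succ_zero_eq_one] using this
    have hrec := ih (fun i => f i.succ) (fun i => by
      have := hmono i.succ
      rw [← Fin.succ_castSucc] at this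
      exact this)
    simp only [Fin.succ_zero_eq_one, Fin.succ_last] at hrec
    have hrec' : ρ (f 1) + k ≤ ρ (f (Fin.last (k + 1))) := hrec
    omega

lemma eta_wtChain {P : Type} (ρ : P → ℕ) :
    ∀ (k : ℕ) (f : Fin (k + 2) → P),
      (∀ i : Fin (k + 1), ρ (f i.castSucc) < ρ (f i.succ)) →
      etaOp (wtChain ρ f) = cv ρ k f • (va - vb) ^ (ρ (f (Fin.last (k + 1))) - ρ (f 0) - 1) := by
  intro k
  induction k with
  | zero =>
    intro f hmono
    have h1 : (f (Fin.last 1)) = f 1 := rfl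
    rw [wtChain_base, etaOp_pow_mul, etaOp_one, thetaOp_one, cv, h1]
    rw [smul_smul, smul_smul, ← add_smul, mul_smul_comm, mul_one]
    congr 1
    ring
  | succ j ih =>
    intro f hmono
    have h0 : ρ (f 0) < ρ (f 1) := by
      have := hmono 0
      simpa [Fin.castSucc_zero, Fin.succ_zero_eq_one] using this
    have hmono' : ∀ i : Fin (j + 1),
        ρ ((fun i : Fin (j+2) => f i.succ) i.castSucc) <
        ρ ((fun i : Fin (j+2) => f i.succ) i.succ) := by
      intro i
      have := hmono i.succ
      rw [← Fin.succ_castSucc] at this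
      exact this
    have hge : ρ (f 1) + (j + 1) ≤ ρ (f (Fin.last (j + 2))) := by
      have := rho_le_last ρ (j + 1) (fun i : Fin (j+2) => f i.succ) hmono'
      simpa [Fin.succ_zero_eq_one, Fin.succ_last] using this
    rw [wtChain_cons, etaOp_pow_mul, thetaOp_b_mul, etaOp_b_mul,
      ih (fun i => f i.succ) hmono']
    simp only [smul_zero, zero_add, Fin.succ_zero_eq_one, Fin.succ_last]
    simp only [mul_smul_comm, smul_smul]
    rw [cv, ← pow_succ', ← pow_add]
    have hge' : ρ (f 1) + (j + 1) ≤ ρ (f (Fin.last (j + 1 + 1))) := hge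
    have hEq2 : ρ (f (Fin.last (j + 1).succ)) = ρ (f (Fin.last (j + 1 + 1))) := rfl
    rw [show ρ (f 1) - ρ (f 0) - 1 + (ρ (f (Fin.last (j + 1).succ)) - ρ (f 1) - 1 + 1)
        = ρ (f (Fin.last (j + 1 + 1))) - ρ (f 0) - 1 from by omega]

lemma cv_closed {P : Type} (ρ : P → ℕ) :
    ∀ (k : ℕ) (f : Fin (k + 2) → P),
      (∀ i : Fin (k + 1), ρ (f i.castSucc) < ρ (f i.succ)) →
      cv ρ k f = (-1) ^ (ρ (f (Fin.last k).castSucc) + ρ (f 0) + k) *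
        (1 - (-1) ^ (ρ (f (Fin.last (k + 1))) + ρ (f (Fin.last k).castSucc))) := by
  intro k
  induction k with
  | zero =>
    intro f hmono
    have h0 : ρ (f 0) < ρ (f 1) := by
      have := hmono 0
      simpa [Fin.castSucc_zero, Fin.succ_zero_eq_one] using this
    have hc : ((Fin.last 0).castSucc : Fin 2) = 0 := rfl
    have hl : (Fin.last 1 : Fin 2) = 1 := rfl
    rw [cv, hc, hl]
    rcases Nat.even_or_odd (ρ (f 1) - ρ (f 0) - 1) with h | h
    · have ha : alphaE (ρ (f 1) - ρ (f 0) - 1) = 0 := if_pos h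
      have hodd : Odd (ρ (f 1) + ρ (f 0)) := by
        rw [Nat.odd_iff]
        rw [Nat.even_iff] at h
        omega
      have heven : Even (ρ (f 0) + ρ (f 0) + 0) := ⟨ρ (f 0), by omega⟩
      rw [ha, h.neg_one_pow, hodd.neg_one_pow, heven.neg_one_pow]
      norm_num
    · have ha : alphaE (ρ (f 1) - ρ (f 0) - 1) = 1 := if_neg (Nat.not_even_iff_odd.2 h)
      have heven : Even (ρ (f 1) + ρ (f 0)) := by
        rw [Nat.even_iff]
        rw [Nat.odd_iff] at h
        omega
      rw [ha, h.neg_one_pow, heven.neg_one_pow]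
      norm_num
  | succ j ih =>
    intro f hmono
    have h0 : ρ (f 0) < ρ (f 1) := by
      have := hmono 0
      simpa [Fin.castSucc_zero, Fin.succ_zero_eq_one] using this
    have hmono' : ∀ i : Fin (j + 1),
        ρ ((fun i : Fin (j+2) => f i.succ) i.castSucc) <
        ρ ((fun i : Fin (j+2) => f i.succ) i.succ) := by
      intro i
      have := hmono i.succ
      rw [← Fin.succ_castSucc] at this
      exact this
    rw [cv, ih (fun i => f i.succ) hmono']
    simp only [Fin.succ_zero_eq_one, Fin.succ_last, pen_index_eq]
    rw [← mul_assoc, ← pow_add]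
    congr 1
    apply negpow_congr
    have h1 := Nat.sub_add_cancel (Nat.one_le_iff_ne_zero.2 (by omega : ρ (f 1) - ρ (f 0) ≠ 0))
    omega

end EtaProofAuxB
section EtaProofAuxC

variable {P : Type} [Fintype P] [PartialOrder P] [BoundedOrder P]
  [DecidableEq P] [LocallyFiniteOrder P]

lemma rho_lt_of_lt (ρ : P → ℕ) (hgrade : ∀ x y : P, x ⋖ y → ρ y = ρ x + 1) :
    ∀ (m : ℕ) (x y : P), x < y → (Finset.Icc x y).card ≤ m → ρ x < ρ y := by
  intro m
  induction m with
  | zero =>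
    intro x y hxy hcard
    exfalso
    have hx : x ∈ Finset.Icc x y := Finset.mem_Icc.2 ⟨le_refl x, hxy.le⟩
    have := Finset.card_pos.2 ⟨x, hx⟩
    omega
  | succ m ih =>
    intro x y hxy hcard
    by_cases hc : x ⋖ y
    · rw [hgrade x y hc]; omega
    · obtain ⟨z, hxz, hzy⟩ := (not_covBy_iff hxy).1 hc
      have hsub1 : Finset.Icc x z ⊂ Finset.Icc x y := by
        refine ⟨Finset.Icc_subset_Icc_right hzy.le, fun hsub => ?_⟩
        have hy : y ∈ Finset.Icc x y := Finset.mem_Icc.2 ⟨hxy.le, le_refl y⟩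
        have := (Finset.mem_Icc.1 (hsub hy)).2
        exact absurd (lt_of_le_of_lt this hzy) (lt_irrefl y)
      have hsub2 : Finset.Icc z y ⊂ Finset.Icc x y := by
        refine ⟨Finset.Icc_subset_Icc_left hxz.le, fun hsub => ?_⟩
        have hx : x ∈ Finset.Icc x y := Finset.mem_Icc.2 ⟨le_refl x, hxy.le⟩
        have := (Finset.mem_Icc.1 (hsub hx)).1
        exact absurd (lt_of_lt_of_le hxz this) (lt_irrefl x)
      have h1 := Finset.card_lt_card hsub1
      have h2 := Finset.card_lt_card hsub2
      exact lt_trans (ih x z hxz (by omega)) (ih z y hzy (by omega))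

lemma rho_lt (ρ : P → ℕ) (hgrade : ∀ x y : P, x ⋖ y → ρ y = ρ x + 1)
    {x y : P} (h : x < y) : ρ x < ρ y :=
  rho_lt_of_lt ρ hgrade (Finset.Icc x y).card x y h le_rfl

lemma strictMono_snoc {j : ℕ} (g : Fin (j + 1) → P) (z : P) :
    StrictMono (Fin.snoc g z : Fin (j + 2) → P) ↔ StrictMono g ∧ g (Fin.last j) < z := by
  constructor
  · intro h
    refine ⟨fun a b hab => ?_, ?_⟩
    · have := h (show (a.castSucc : Fin (j+2)) < b.castSucc from by
        rwa [Fin.castSucc_lt_castSucc_iff])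
      rwa [Fin.snoc_castSucc, Fin.snoc_castSucc] at this
    · have := h (Fin.castSucc_lt_last (Fin.last j))
      rwa [Fin.snoc_castSucc, Fin.snoc_last] at this
  · rintro ⟨hg, hz⟩
    rw [Fin.strictMono_iff_lt_succ]
    intro i
    induction i using Fin.lastCases with
    | last =>
      rw [Fin.succ_last, Fin.snoc_last, Fin.snoc_castSucc]
      exact hz
    | cast i =>
      rw [Fin.succ_castSucc, Fin.snoc_castSucc, Fin.snoc_castSucc]
      exact hg (Fin.castSucc_lt_succ (i := i))

variable (P)

noncomputable def cnt (j : ℕ) (z : P) : ℤ :=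
  ∑ f : Fin (j + 1) → P,
    if StrictMono f ∧ f 0 = ⊥ ∧ f (Fin.last j) = z then 1 else 0

noncomputable def Nz (z : P) : ℤ :=
  ∑ k ∈ Finset.range (Fintype.card P + 1), (-1) ^ k * cnt P k z

variable {P}

lemma peel (j : ℕ) (y : P) (g : P → ℤ) :
    (∑ f : Fin (j + 2) → P,
      if StrictMono f ∧ f 0 = ⊥ ∧ f (Fin.last (j + 1)) = y
      then g (f (Fin.last j).castSucc) else 0)
    = ∑ z ∈ Finset.Ico (⊥ : P) y, g z * cnt P j z := by
  have hE : ∀ (z : P) (gg : Fin (j+1) → P),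
      ((Fin.snocEquiv (fun _ => P)) (z, gg) : Fin (j+2) → P) = Fin.snoc gg z :=
    fun z gg => funext fun i => rfl
  rw [← Equiv.sum_comp (Fin.snocEquiv (fun _ => P)) (fun f : Fin (j+2) → P =>
    if StrictMono f ∧ f 0 = ⊥ ∧ f (Fin.last (j + 1)) = y
    then g (f (Fin.last j).castSucc) else 0), Fintype.sum_prod_type]
  have h0cast : ((0 : Fin (j+2))) = ((0 : Fin (j+1)).castSucc) := by simp
  have hstep1 : ∀ (z : P) (gg : Fin (j + 1) → P),
      (if StrictMono (Fin.snoc gg z : Fin (j+2) → P) ∧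
          (Fin.snoc gg z : Fin (j+2) → P) 0 = ⊥ ∧
          (Fin.snoc gg z : Fin (j+2) → P) (Fin.last (j + 1)) = y
       then g ((Fin.snoc gg z : Fin (j+2) → P) (Fin.last j).castSucc) else 0)
      = (if z = y then
          (if StrictMono gg ∧ gg 0 = ⊥ then
            (if gg (Fin.last j) < z then g (gg (Fin.last j)) else 0) else 0) else 0) := by
    intro z gg
    rw [h0cast, Fin.snoc_castSucc, Fin.snoc_castSucc]
    simp only [strictMono_snoc, Fin.snoc_last]
    split_ifs <;> tauto
  calc
    ∑ z : P, ∑ gg : Fin (j+1) → P,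
        (if StrictMono ((Fin.snocEquiv (fun _ => P)) (z, gg) : Fin (j+2) → P) ∧
            ((Fin.snocEquiv (fun _ => P)) (z, gg) : Fin (j+2) → P) 0 = ⊥ ∧
            ((Fin.snocEquiv (fun _ => P)) (z, gg) : Fin (j+2) → P) (Fin.last (j + 1)) = y
         then g (((Fin.snocEquiv (fun _ => P)) (z, gg) : Fin (j+2) → P) (Fin.last j).castSucc)
         else 0)
      = ∑ z : P, ∑ gg : Fin (j+1) → P,
        (if z = y then
          (if StrictMono gg ∧ gg 0 = ⊥ then
            (if gg (Fin.last j) < z then g (gg (Fin.last j)) else 0) else 0) else 0) := by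
        refine Finset.sum_congr rfl fun z _ => Finset.sum_congr rfl fun gg _ => ?_
        rw [hE z gg, hstep1 z gg]
    _ = ∑ gg : Fin (j+1) → P,
          (if StrictMono gg ∧ gg 0 = ⊥ then
            (if gg (Fin.last j) < y then g (gg (Fin.last j)) else 0) else 0) := by
        rw [Finset.sum_comm]
        refine Finset.sum_congr rfl fun gg _ => ?_
        rw [Finset.sum_ite_eq' Finset.univ y]
        rw [if_pos (Finset.mem_univ y)]
    _ = ∑ z ∈ Finset.Ico (⊥ : P) y, g z * cnt P j z := by
        unfold cnt
        rw [Finset.sum_congr rfl (fun (z : P) (_ : z ∈ Finset.Ico (⊥ : P) y) =>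
          Finset.mul_sum Finset.univ _ (g z)), Finset.sum_comm]
        refine Finset.sum_congr rfl fun gg _ => ?_
        by_cases hC : StrictMono gg ∧ gg 0 = ⊥
        · rw [if_pos hC]
          have hcong : ∀ z ∈ Finset.Ico (⊥ : P) y,
              g z * (if StrictMono gg ∧ gg 0 = ⊥ ∧ gg (Fin.last j) = z then 1 else 0)
                = (if gg (Fin.last j) = z then g z else 0) := by
            intro z _
            by_cases hz : gg (Fin.last j) = z
            · rw [if_pos hz, if_pos ⟨hC.1, hC.2, hz⟩, mul_one]
            · rw [if_neg hz, if_neg (fun hcon => hz hcon.2.2), mul_zero]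
          rw [Finset.sum_congr rfl hcong, Finset.sum_ite_eq]
          by_cases hlt : gg (Fin.last j) < y
          · rw [if_pos (Finset.mem_Ico.2 ⟨bot_le, hlt⟩), if_pos hlt]
          · rw [if_neg (fun hm => hlt (Finset.mem_Ico.1 hm).2), if_neg hlt]
        · rw [if_neg hC, Finset.sum_eq_zero]
          intro z _
          rw [if_neg (fun hcon => hC ⟨hcon.1, hcon.2.1⟩), mul_zero]

lemma cnt_zero (z : P) : cnt P 0 z = if z = ⊥ then 1 else 0 := by
  unfold cnt
  have hone : ∀ i : Fin 1, i = 0 := fun i => Fin.ext (by omega)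
  have hsm : ∀ f : Fin 1 → P, StrictMono f := by
    intro f a b hab
    have ha := a.isLt
    have hb := b.isLt
    have hab' : (a : ℕ) < b := hab
    omega
  by_cases hz : z = ⊥
  · subst hz
    rw [if_pos rfl]
    rw [Finset.sum_congr rfl (fun f _ => show
        (if StrictMono f ∧ f 0 = ⊥ ∧ f (Fin.last 0) = ⊥ then (1:ℤ) else 0)
          = if f = (fun _ => ⊥) then 1 else 0 from by
      have h00 : (Fin.last 0) = (0 : Fin 1) := rfl
      rw [h00]
      by_cases hf : f 0 = ⊥
      · rw [if_pos ⟨hsm f, hf, hf⟩, if_pos (funext fun i => by rw [hone i]; exact hf)]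
      · rw [if_neg (fun hcon => hf hcon.2.1), if_neg (fun hcon => hf (by rw [hcon]))])]
    rw [Finset.sum_ite_eq' Finset.univ]
    rw [if_pos (Finset.mem_univ _)]
  · rw [if_neg hz, Finset.sum_eq_zero]
    intro f _
    refine if_neg (fun hcon => hz ?_)
    have h00 : (Fin.last 0) = (0 : Fin 1) := rfl
    rw [← hcon.2.2, h00, hcon.2.1]

lemma cnt_large (j : ℕ) (z : P) (h : Fintype.card P ≤ j) : cnt P j z = 0 := by
  unfold cnt
  rw [Finset.sum_eq_zero]
  intro f _
  refine if_neg (fun hcon => ?_)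
  have hinj := Fintype.card_le_of_injective f hcon.1.injective
  rw [Fintype.card_fin] at hinj
  omega

lemma cnt_peel (j : ℕ) (y : P) :
    cnt P (j + 1) y = ∑ z ∈ Finset.Ico (⊥ : P) y, cnt P j z := by
  have := peel j y (fun _ => 1)
  unfold cnt at this ⊢
  simp only [one_mul] at this
  exact this

lemma Nz_bot : Nz P (⊥ : P) = 1 := by
  unfold Nz
  rw [Finset.sum_range_succ']
  have h1 : ∀ j ∈ Finset.range (Fintype.card P),
      (-1 : ℤ) ^ (j + 1) * cnt P (j + 1) (⊥ : P) = 0 := by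
    intro j _
    rw [cnt_peel, Finset.Ico_self, Finset.sum_empty, mul_zero]
  rw [Finset.sum_congr rfl h1, Finset.sum_const_zero, zero_add, pow_zero, one_mul, cnt_zero,
    if_pos rfl]

lemma Nz_rec (y : P) (hy : y ≠ ⊥) : Nz P y = -∑ z ∈ Finset.Ico (⊥ : P) y, Nz P z := by
  unfold Nz
  rw [Finset.sum_range_succ']
  rw [pow_zero, one_mul, cnt_zero, if_neg hy, add_zero]
  have h1 : ∀ j ∈ Finset.range (Fintype.card P),
      (-1 : ℤ) ^ (j + 1) * cnt P (j + 1) y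
        = ∑ z ∈ Finset.Ico (⊥ : P) y, -((-1 : ℤ) ^ j * cnt P j z) := by
    intro j _
    rw [cnt_peel, Finset.mul_sum]
    refine Finset.sum_congr rfl fun z _ => ?_
    rw [pow_succ]
    ring
  rw [Finset.sum_congr rfl h1, Finset.sum_comm]
  simp only [Finset.sum_neg_distrib]
  congr 1
  refine Finset.sum_congr rfl fun z _ => ?_
  rw [Finset.sum_range_succ, cnt_large _ z le_rfl, mul_zero, add_zero]

lemma Nz_eq_mu (y : P) : Nz P y = IncidenceAlgebra.mu ℤ (⊥ : P) y := by
  induction y using WellFoundedLT.induction with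
  | _ y ih =>
    by_cases hy : y = ⊥
    · subst hy
      rw [Nz_bot, IncidenceAlgebra.mu_self]
    · rw [Nz_rec y hy, IncidenceAlgebra.mu_eq_neg_sum_Ico_of_ne (fun h => hy h.symm)]
      congr 1
      refine Finset.sum_congr rfl fun z hz => ?_
      exact ih z (Finset.mem_Ico.1 hz).2

end EtaProofAuxC
section EtaProofAuxD

variable {P : Type} [Fintype P] [PartialOrder P] [BoundedOrder P]
  [DecidableEq P] [LocallyFiniteOrder P]

noncomputable def Cval (n : ℕ) (ρ : P → ℕ) : (k : ℕ) → (Fin (k + 1) → P) → ℤ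
  | 0, _ => 0
  | (j + 1), f => (-1) ^ (ρ (f (Fin.last j).castSucc) + j) *
      (1 - (-1) ^ (n + 1 + ρ (f (Fin.last j).castSucc)))

lemma total_count (n : ℕ) (ρ : P → ℕ) (hbot : ρ (⊥ : P) = 0) (htop : ρ (⊤ : P) = n + 1) :
    (∑ k ∈ Finset.range (Fintype.card P + 1), ∑ f : Fin (k + 1) → P,
      if StrictMono f ∧ f 0 = ⊥ ∧ f (Fin.last k) = ⊤ then Cval n ρ k f else 0)
      = ∑ x : P, (-1 : ℤ) ^ (ρ x) * IncidenceAlgebra.mu ℤ (⊥ : P) x := by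
  have hbt : (⊥ : P) ≠ ⊤ := fun h => by rw [h, htop] at hbot; omega
  rw [Finset.sum_range_succ']
  have hzero : (∑ f : Fin (0 + 1) → P,
      if StrictMono f ∧ f 0 = ⊥ ∧ f (Fin.last 0) = ⊤ then Cval n ρ 0 f else 0) = 0 := by
    apply Finset.sum_eq_zero
    intro f _
    simp [Cval]
  rw [hzero, add_zero]
  have hpeel : ∀ j ∈ Finset.range (Fintype.card P),
      (∑ f : Fin (j + 1 + 1) → P,
        if StrictMono f ∧ f 0 = ⊥ ∧ f (Fin.last (j + 1)) = ⊤ then Cval n ρ (j + 1) f else 0)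
      = ∑ z ∈ Finset.Ico (⊥ : P) ⊤,
          ((-1 : ℤ) ^ (ρ z + j) * (1 - (-1) ^ (n + 1 + ρ z))) * cnt P j z := by
    intro j _
    rw [← peel j (⊤ : P) (fun z => (-1 : ℤ) ^ (ρ z + j) * (1 - (-1) ^ (n + 1 + ρ z)))]
    refine Finset.sum_congr rfl fun f _ => ?_
    simp only [Cval]
  rw [Finset.sum_congr rfl hpeel, Finset.sum_comm]
  have hinner : ∀ z ∈ Finset.Ico (⊥ : P) ⊤,
      (∑ j ∈ Finset.range (Fintype.card P),
        ((-1 : ℤ) ^ (ρ z + j) * (1 - (-1) ^ (n + 1 + ρ z))) * cnt P j z)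
      = ((-1 : ℤ) ^ (ρ z) + (-1) ^ n) * IncidenceAlgebra.mu ℤ (⊥ : P) z := by
    intro z _
    have h1 : ∀ j ∈ Finset.range (Fintype.card P),
        ((-1 : ℤ) ^ (ρ z + j) * (1 - (-1) ^ (n + 1 + ρ z))) * cnt P j z
        = ((-1 : ℤ) ^ (ρ z) * (1 - (-1) ^ (n + 1 + ρ z))) * ((-1) ^ j * cnt P j z) := by
      intro j _
      rw [pow_add]
      ring
    rw [Finset.sum_congr rfl h1, ← Finset.mul_sum]
    have h2 : (∑ j ∈ Finset.range (Fintype.card P), (-1 : ℤ) ^ j * cnt P j z) = Nz P z := by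
      unfold Nz
      rw [Finset.sum_range_succ, cnt_large _ z le_rfl, mul_zero, add_zero]
    rw [h2, Nz_eq_mu]
    congr 1
    have hsq : ((-1 : ℤ)) ^ (ρ z) * (-1) ^ (ρ z) = 1 := by
      rw [← pow_add]
      exact Even.neg_one_pow ⟨ρ z, rfl⟩
    have expand : ((-1 : ℤ)) ^ (ρ z) * (1 - (-1) ^ (n + 1 + ρ z))
        = (-1) ^ (ρ z) + (-1) ^ n * ((-1) ^ (ρ z) * (-1) ^ (ρ z)) := by
      rw [pow_add, pow_succ]
      ring
    rw [expand, hsq, mul_one]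
  rw [Finset.sum_congr rfl hinner]
  have hsplit : ∀ z ∈ Finset.Ico (⊥ : P) ⊤,
      ((-1 : ℤ) ^ (ρ z) + (-1) ^ n) * IncidenceAlgebra.mu ℤ (⊥ : P) z
      = (-1) ^ (ρ z) * IncidenceAlgebra.mu ℤ (⊥ : P) z
        + (-1) ^ n * IncidenceAlgebra.mu ℤ (⊥ : P) z := fun z _ => by ring
  rw [Finset.sum_congr rfl hsplit, Finset.sum_add_distrib]
  have hmu : (∑ z ∈ Finset.Ico (⊥ : P) ⊤, (-1 : ℤ) ^ n * IncidenceAlgebra.mu ℤ (⊥ : P) z)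
      = (-1) ^ (ρ (⊤ : P)) * IncidenceAlgebra.mu ℤ (⊥ : P) ⊤ := by
    rw [← Finset.mul_sum]
    have hrec := IncidenceAlgebra.mu_eq_neg_sum_Ico_of_ne (𝕜 := ℤ) hbt
    have hS : (∑ x ∈ Finset.Ico (⊥ : P) ⊤, IncidenceAlgebra.mu ℤ (⊥ : P) x)
        = - IncidenceAlgebra.mu ℤ (⊥ : P) ⊤ := by
      rw [hrec, neg_neg]
    rw [hS, htop, pow_succ]
    ring
  rw [hmu]
  have huniv : (Finset.univ : Finset P) = Finset.Icc ⊥ ⊤ := by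
    ext x
    simp
  conv_rhs => rw [huniv, ← Finset.Ico_insert_right (bot_le : (⊥ : P) ≤ ⊤),
    Finset.sum_insert (fun h => absurd (Finset.mem_Ico.1 h).2 (lt_irrefl _))]
  rw [add_comm]

lemma term_eq (n : ℕ) (ρ : P → ℕ) (hbot : ρ (⊥ : P) = 0) (htop : ρ (⊤ : P) = n + 1)
    (hgrade : ∀ x y : P, x ⋖ y → ρ y = ρ x + 1) (k : ℕ) (f : Fin (k + 1) → P) :
    (if StrictMono f ∧ f 0 = ⊥ ∧ f (Fin.last k) = ⊤ then etaOp (wtChain ρ f) else 0)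
    = (if StrictMono f ∧ f 0 = ⊥ ∧ f (Fin.last k) = ⊤ then Cval n ρ k f else 0)
        • (va - vb) ^ n := by
  by_cases hc : StrictMono f ∧ f 0 = ⊥ ∧ f (Fin.last k) = ⊤
  · rw [if_pos hc, if_pos hc]
    cases k with
    | zero =>
      exfalso
      have hbt : (⊥ : P) = ⊤ := by
        rw [← hc.2.1, ← hc.2.2]
        rfl
      rw [hbt, htop] at hbot
      omega
    | succ j =>
      have hmono : ∀ i : Fin (j + 1), ρ (f i.castSucc) < ρ (f i.succ) :=
        fun i => rho_lt ρ hgrade (hc.1 (Fin.castSucc_lt_succ (i := i)))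
      have h00 : ρ (f 0) = 0 := by rw [hc.2.1, hbot]
      have hLL : ρ (f (Fin.last (j + 1))) = n + 1 := by rw [hc.2.2, htop]
      rw [eta_wtChain ρ j f hmono, cv_closed ρ j f hmono, h00, hLL, add_zero]
      rw [show n + 1 - 0 - 1 = n from by omega]
      simp only [Cval]
  · rw [if_neg hc, if_neg hc, zero_smul]

end EtaProofAuxD
lemma etaOp_finset_sum {ι : Type*} (s : Finset ι) (F : ι → Alg) :
    etaOp (∑ i ∈ s, F i) = ∑ i ∈ s, etaOp (F i) := by
  rw [etaOp_eq]
  simp only [MonoidAlgebra.coeff_sum]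
  exact map_sum _ _ _

/-- `η(Ψ(P)) = Z(P) · (a-b)^n` for a graded poset of rank `n+1`,
where `Z(P) = Σ_x (-1)^{ρ(x)} μ(0̂,x)` is the Zaslavsky invariant. -/
theorem eta_abIndex {P : Type} [Fintype P] [PartialOrder P] [BoundedOrder P]
    [DecidableEq P] [LocallyFiniteOrder P]
    (n : ℕ) (ρ : P → ℕ) (hbot : ρ ⊥ = 0) (htop : ρ ⊤ = n + 1)
    (hgrade : ∀ x y : P, x ⋖ y → ρ y = ρ x + 1) :
    etaOp (PsiI ρ (fun _ _ => (1 : ℤ)) ⊥ ⊤)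
      = (∑ x : P, (-1 : ℤ) ^ (ρ x) * IncidenceAlgebra.mu ℤ (⊥ : P) x) • (va - vb) ^ n := by
  have hPsi : PsiI ρ (fun _ _ => (1 : ℤ)) (⊥ : P) ⊤
      = ∑ k ∈ Finset.range (Fintype.card P + 1), ∑ f : Fin (k + 1) → P,
        if StrictMono f ∧ f 0 = ⊥ ∧ f (Fin.last k) = (⊤ : P) then wtChain ρ f else 0 := by
    unfold PsiI
    refine Finset.sum_congr rfl fun k _ => Finset.sum_congr rfl fun f _ => ?_
    have hz : zetaChain (fun _ _ => (1 : ℤ)) f = 1 := by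
      unfold zetaChain
      simp
    split_ifs with h
    · rw [hz, one_smul]
    · rfl
  rw [hPsi, etaOp_finset_sum]
  have hstep2 : ∀ k ∈ Finset.range (Fintype.card P + 1),
      etaOp (∑ f : Fin (k + 1) → P,
        if StrictMono f ∧ f 0 = ⊥ ∧ f (Fin.last k) = (⊤ : P) then wtChain ρ f else 0)
      = (∑ f : Fin (k + 1) → P,
        if StrictMono f ∧ f 0 = ⊥ ∧ f (Fin.last k) = (⊤ : P) then Cval n ρ k f else 0)
          • (va - vb) ^ n := by
    intro k _
    rw [etaOp_finset_sum, Finset.sum_smul]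
    refine Finset.sum_congr rfl fun f _ => ?_
    rw [apply_ite etaOp, etaOp_zero]
    exact term_eq n ρ hbot htop hgrade k f
  rw [Finset.sum_congr rfl hstep2, ← Finset.sum_smul, total_count n ρ hbot htop]
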